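/- For any function f : B → B and all x, y ∈ B, the variation of f from x to y satisfies δf(x → y) = xnor(δ(x → y), f'(x)), where xnor is taken in the three-valued logic M. -/
import Mathlib


/-- The three-valued logic `M = {T, 0, F}`. -/
inductive Tri where
  | T : Tri
  | Z : Tri
  | F : Tri
deriving DecidableEq

/-- Negation in `M`, with `¬0 = 0`. -/
def Tri.neg : Tri → Tri
  | .T => .F
  | .Z => .Z
  | .F => .T

/-- XNOR in `M`: `0` if either argument is `0`, otherwise the Boolean XNOR. -/
def Tri.xnor : Tri → Tri → Tri
  | .Z, _ => .Z
  | _, .Z => .Z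
  | a, b => if a = b then .T else .F

/-- Inclusion of the Boolean set `B = {T, F}` into `M`. -/
def Tri.ofBool : Bool → Tri
  | true => .T
  | false => .F

/-- Variation `δ(x → y)` of a Boolean `x` to `y`, with order `F < T`
(`false < true`): `T` if `y > x`, `0` if `y = x`, `F` if `y < x`. -/
def bvar (x y : Bool) : Tri :=
  if x = y then .Z else if y then .T else .F

/-- Variation of `f : B → B`: `f'(x) = xnor(δ(x → ¬x), δ(f x → f ¬x))`. -/
def varB (f : Bool → Bool) (x : Bool) : Tri :=
  Tri.xnor (bvar x (!x)) (bvar (f x) (f (!x)))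

theorem bvar_apply (f : Bool → Bool) (x y : Bool) :
    bvar (f x) (f y) = Tri.xnor (bvar x y) (varB f x) := by
  cases x <;> cases y <;> cases h0 : f false <;> cases h1 : f true <;> simp [bvar, varB, Tri.xnor, h0, h1]
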